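/- Let p ≥ 1 and q be integers with gcd(p,q) = 1, and let k₁, k₂ be nonzero integers with gcd(k₁,k₂) = 1. Let C := { (e^{ik₁t}/√2, e^{ik₂t}/√2) : t ∈ ℝ } ⊂ ℂ², a regular fibre of the Seifert fibration of S³ induced by the circle action θ·(z₁,z₂) = (e^{ik₁θ}z₁, e^{ik₂θ}z₂). Then the number of ℓ ∈ {0, 1, …, p−1} for which the rotation (z₁,z₂) ↦ (e^{2πiℓ/p}z₁, e^{2πiqℓ/p}z₂) maps the set C onto itself equals gcd(p, qk₁ − k₂). -/

import Mathlib

open Complex Real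

private lemma expIeq (x y : ℝ) :
    Complex.exp (Complex.I * x) = Complex.exp (Complex.I * y) ↔
      ∃ n : ℤ, x = y + n * (2 * π) := by
  rw [Complex.exp_eq_exp_iff_exists_int]
  constructor
  · rintro ⟨n, h⟩
    refine ⟨n, ?_⟩
    have h' : (Complex.I * (x:ℂ)) = Complex.I * ((y + n * (2 * π) : ℝ) : ℂ) := by
      push_cast
      rw [h]; ring
    have := mul_left_cancel₀ Complex.I_ne_zero h'
    exact_mod_cast this
  · rintro ⟨n, h⟩
    exact ⟨n, by rw [h]; push_cast; ring⟩

private lemma rot_image_eq (k₁ k₂ : ℤ) (w₁ w₂ : ℂ) :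
    ((fun zz : ℂ × ℂ => (w₁ * zz.1, w₂ * zz.2)) ''
        (Set.range fun t : ℝ =>
          ((Complex.exp (Complex.I * k₁ * t) / Real.sqrt 2 : ℂ),
            (Complex.exp (Complex.I * k₂ * t) / Real.sqrt 2 : ℂ))) =
      (Set.range fun t : ℝ =>
          ((Complex.exp (Complex.I * k₁ * t) / Real.sqrt 2 : ℂ),
            (Complex.exp (Complex.I * k₂ * t) / Real.sqrt 2 : ℂ)))) ↔
    ∃ s : ℝ, w₁ = Complex.exp (Complex.I * k₁ * s) ∧ w₂ = Complex.exp (Complex.I * k₂ * s) := by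
  have h2 : (Real.sqrt 2 : ℂ) ≠ 0 := by
    exact_mod_cast Real.sqrt_ne_zero'.mpr (by norm_num)
  constructor
  · intro h
    have hmem : (w₁ * (Complex.exp (Complex.I * k₁ * (0:ℝ)) / Real.sqrt 2),
        w₂ * (Complex.exp (Complex.I * k₂ * (0:ℝ)) / Real.sqrt 2)) ∈
        (Set.range fun t : ℝ =>
          ((Complex.exp (Complex.I * k₁ * t) / Real.sqrt 2 : ℂ),
            (Complex.exp (Complex.I * k₂ * t) / Real.sqrt 2 : ℂ))) := by
      rw [← h]
      exact ⟨_, ⟨0, rfl⟩, rfl⟩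
    obtain ⟨s, hs⟩ := hmem
    have hs1 := congrArg Prod.fst hs
    have hs2 := congrArg Prod.snd hs
    simp only at hs1 hs2
    refine ⟨s, ?_, ?_⟩
    · field_simp at hs1
      simpa using hs1.symm
    · field_simp at hs2
      simpa using hs2.symm
  · rintro ⟨s, hw₁, hw₂⟩
    ext z
    simp only [Set.mem_image, Set.mem_range]
    constructor
    · rintro ⟨_, ⟨t, rfl⟩, rfl⟩
      refine ⟨s + t, ?_⟩
      rw [hw₁, hw₂]
      have e1 : Complex.I * (k₁:ℂ) * ((s+t:ℝ):ℂ) = Complex.I * k₁ * s + Complex.I * k₁ * t := by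
        push_cast; ring
      have e2 : Complex.I * (k₂:ℂ) * ((s+t:ℝ):ℂ) = Complex.I * k₂ * s + Complex.I * k₂ * t := by
        push_cast; ring
      rw [e1, e2, Complex.exp_add, Complex.exp_add]
      simp [mul_div_assoc]
    · rintro ⟨t, rfl⟩
      refine ⟨_, ⟨t - s, rfl⟩, ?_⟩
      rw [hw₁, hw₂]
      have e1 : Complex.I * (k₁:ℂ) * ((t:ℝ):ℂ)
          = Complex.I * k₁ * s + Complex.I * k₁ * ((t - s : ℝ):ℂ) := by
        push_cast; ring
      have e2 : Complex.I * (k₂:ℂ) * ((t:ℝ):ℂ)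
          = Complex.I * k₂ * s + Complex.I * k₂ * ((t - s : ℝ):ℂ) := by
        push_cast; ring
      rw [e1, e2, Complex.exp_add, Complex.exp_add]
      simp [mul_div_assoc]

private lemma exists_s_iff_dvd (p q k₁ k₂ ℓ : ℤ) (hp : 1 ≤ p) (hk₁ : k₁ ≠ 0)
    (hk : Int.gcd k₁ k₂ = 1) :
    (∃ s : ℝ, (∃ a : ℤ, 2*π*ℓ/p = k₁*s + a*(2*π)) ∧
       (∃ b : ℤ, 2*π*(q*ℓ)/p = k₂*s + b*(2*π))) ↔ p ∣ (q*k₁ - k₂)*ℓ := by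
  have hp0 : (p:ℝ) ≠ 0 := by positivity
  have hπ : (2*π) ≠ 0 := by positivity
  constructor
  · rintro ⟨s, ⟨a, h1⟩, ⟨b, h2⟩⟩
    rw [div_eq_iff hp0] at h1 h2
    have key2 : 2*π*(((q*k₁ - k₂)*ℓ : ℤ) : ℝ) = 2*π*((p*(k₁*b - k₂*a) : ℤ) : ℝ) := by
      push_cast
      linear_combination (k₁:ℝ)*h2 - (k₂:ℝ)*h1
    have key3 : (((q*k₁ - k₂)*ℓ : ℤ) : ℝ) = ((p*(k₁*b - k₂*a) : ℤ) : ℝ) :=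
      mul_left_cancel₀ hπ key2
    exact ⟨k₁*b - k₂*a, by exact_mod_cast key3⟩
  · rintro ⟨m, hm⟩
    set u := Int.gcdA k₁ k₂ with hu
    set v := Int.gcdB k₁ k₂ with hv
    have hbez : k₁*u + k₂*v = 1 := by
      have := Int.gcd_eq_gcd_ab k₁ k₂
      rw [hk] at this
      exact_mod_cast this.symm
    have hk₁0 : (k₁ : ℝ) ≠ 0 := Int.cast_ne_zero.mpr hk₁
    refine ⟨(2*π*ℓ/p - (-v*m)*(2*π))/k₁, ⟨-v*m, ?_⟩, ⟨u*m, ?_⟩⟩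
    · field_simp
      push_cast; ring
    · have hmR : ((q*k₁-k₂)*ℓ : ℝ) = p*m := by exact_mod_cast hm
      have hbezR : (k₁*u + k₂*v : ℝ) = 1 := by exact_mod_cast hbez
      push_cast
      field_simp
      linear_combination hmR - ((p:ℝ)*(m:ℝ))*hbezR

private lemma count_dvd (p d : ℤ) (hp : 1 ≤ p) :
    {ℓ : ℤ | 0 ≤ ℓ ∧ ℓ < p ∧ p ∣ d * ℓ}.ncard = Int.gcd p d := by
  set g : ℕ := Int.gcd p d with hg
  have hp0 : p ≠ 0 := by omega
  have hg0 : 0 < (g:ℤ) := by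
    exact_mod_cast Int.gcd_pos_of_ne_zero_left d hp0
  have hgp : (g:ℤ) ∣ p := Int.gcd_dvd_left p d
  have hgd : (g:ℤ) ∣ d := Int.gcd_dvd_right p d
  set m : ℤ := p / g with hm
  set e : ℤ := d / g with he
  have hpm : p = m * g := by
    rw [hm]; exact (Int.ediv_mul_cancel hgp).symm
  have hde : d = e * g := by
    rw [he]; exact (Int.ediv_mul_cancel hgd).symm
  have hm0 : 0 < m := by nlinarith
  have hcop : Int.gcd m e = 1 := by
    rw [hm, he]
    exact Int.gcd_div_gcd_div_gcd (by exact_mod_cast hg0)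
  have hdvd : ∀ ℓ : ℤ, (p ∣ d * ℓ ↔ m ∣ ℓ) := by
    intro ℓ
    constructor
    · intro h
      rw [hpm, hde] at h
      have h' : m * g ∣ (e * ℓ) * g := by
        convert h using 1; ring
      have h'' : m ∣ e * ℓ := (mul_dvd_mul_iff_right (by omega : (g:ℤ) ≠ 0)).mp h'
      exact Int.dvd_of_dvd_mul_right_of_gcd_one h'' hcop
    · rintro ⟨c, rfl⟩
      exact ⟨e * c, by rw [hpm, hde]; ring⟩
  have hset : {ℓ : ℤ | 0 ≤ ℓ ∧ ℓ < p ∧ p ∣ d * ℓ} =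
      ↑((Finset.Ico (0:ℤ) g).image (fun j => m * j)) := by
    ext ℓ
    simp only [Set.mem_setOf_eq, Finset.coe_image, Set.mem_image, Finset.mem_coe,
      Finset.mem_Ico, hdvd]
    constructor
    · rintro ⟨h0, h1, c, rfl⟩
      refine ⟨c, ⟨by nlinarith, by nlinarith⟩, rfl⟩
    · rintro ⟨c, ⟨hc0, hc1⟩, rfl⟩
      refine ⟨mul_nonneg hm0.le hc0, by nlinarith, ⟨c, rfl⟩⟩
  rw [hset, Set.ncard_coe_finset,
    Finset.card_image_of_injective _ (mul_right_injective₀ (by omega : m ≠ 0)),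
    Int.card_Ico]
  omega

/-- The number of elements of `ℤ/p` whose action on `S³` leaves the regular
fibre `C = {(e^{ik₁t}/√2, e^{ik₂t}/√2) : t ∈ ℝ}` of the Seifert fibration
induced by the circle action `θ·(z₁,z₂) = (e^{ik₁θ}z₁, e^{ik₂θ}z₂)` invariant
equals `gcd(p, qk₁ − k₂)`. -/
theorem fibre_stabilizer_card (p q : ℤ) (hp : 1 ≤ p) (hpq : Int.gcd p q = 1)
    (k₁ k₂ : ℤ) (hk₁ : k₁ ≠ 0) (hk₂ : k₂ ≠ 0) (hk : Int.gcd k₁ k₂ = 1) :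
    {ℓ : ℤ | 0 ≤ ℓ ∧ ℓ < p ∧
      (fun zz : ℂ × ℂ =>
          (Complex.exp (2 * π * Complex.I * ℓ / p) * zz.1,
            Complex.exp (2 * π * Complex.I * (q * ℓ) / p) * zz.2)) ''
        (Set.range fun t : ℝ =>
          ((Complex.exp (Complex.I * k₁ * t) / Real.sqrt 2 : ℂ),
            (Complex.exp (Complex.I * k₂ * t) / Real.sqrt 2 : ℂ))) =
      (Set.range fun t : ℝ =>
          ((Complex.exp (Complex.I * k₁ * t) / Real.sqrt 2 : ℂ),
            (Complex.exp (Complex.I * k₂ * t) / Real.sqrt 2 : ℂ)))}.ncard =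
    Int.gcd p (q * k₁ - k₂) := by
  have hiff : ∀ ℓ : ℤ,
      ((fun zz : ℂ × ℂ =>
          (Complex.exp (2 * π * Complex.I * ℓ / p) * zz.1,
            Complex.exp (2 * π * Complex.I * (q * ℓ) / p) * zz.2)) ''
        (Set.range fun t : ℝ =>
          ((Complex.exp (Complex.I * k₁ * t) / Real.sqrt 2 : ℂ),
            (Complex.exp (Complex.I * k₂ * t) / Real.sqrt 2 : ℂ))) =
      (Set.range fun t : ℝ =>
          ((Complex.exp (Complex.I * k₁ * t) / Real.sqrt 2 : ℂ),
            (Complex.exp (Complex.I * k₂ * t) / Real.sqrt 2 : ℂ)))) ↔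
      p ∣ (q * k₁ - k₂) * ℓ := by
    intro ℓ
    rw [rot_image_eq k₁ k₂]
    rw [← exists_s_iff_dvd p q k₁ k₂ ℓ hp hk₁ hk]
    apply exists_congr
    intro s
    have e1 : (2 * π * Complex.I * (ℓ:ℂ) / (p:ℂ)) = Complex.I * ((2*π*ℓ/p : ℝ) : ℂ) := by
      push_cast; ring
    have e2 : (2 * π * Complex.I * ((q:ℂ) * (ℓ:ℂ)) / (p:ℂ))
        = Complex.I * ((2*π*(q*ℓ)/p : ℝ) : ℂ) := by
      push_cast; ring
    have e3 : Complex.I * (k₁:ℂ) * (s:ℂ) = Complex.I * ((k₁*s : ℝ) : ℂ) := by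
      push_cast; ring
    have e4 : Complex.I * (k₂:ℂ) * (s:ℂ) = Complex.I * ((k₂*s : ℝ) : ℂ) := by
      push_cast; ring
    rw [e1, e2, e3, e4, expIeq, expIeq]
  have hset : {ℓ : ℤ | 0 ≤ ℓ ∧ ℓ < p ∧
      (fun zz : ℂ × ℂ =>
          (Complex.exp (2 * π * Complex.I * ℓ / p) * zz.1,
            Complex.exp (2 * π * Complex.I * (q * ℓ) / p) * zz.2)) ''
        (Set.range fun t : ℝ =>
          ((Complex.exp (Complex.I * k₁ * t) / Real.sqrt 2 : ℂ),
            (Complex.exp (Complex.I * k₂ * t) / Real.sqrt 2 : ℂ))) =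
      (Set.range fun t : ℝ =>
          ((Complex.exp (Complex.I * k₁ * t) / Real.sqrt 2 : ℂ),
            (Complex.exp (Complex.I * k₂ * t) / Real.sqrt 2 : ℂ)))} =
      {ℓ : ℤ | 0 ≤ ℓ ∧ ℓ < p ∧ p ∣ (q * k₁ - k₂) * ℓ} := by
    ext ℓ
    simp only [Set.mem_setOf_eq, hiff]
  rw [hset]
  have : ∀ ℓ : ℤ, ((q * k₁ - k₂) * ℓ) = (q * k₁ - k₂) * ℓ := fun _ => rfl
  have := count_dvd p (q * k₁ - k₂) hp
  simpa using this
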